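/- Let S₁ and S₂ be two (real or complex) n×n invertible matrices that are semisimple (diagonalizable over ℂ) and such that every eigenvalue of S₁ and of S₂, written in polar form ρ e^{iθ} with ρ > 0, satisfies −π/2 < θ ≤ π/2. If S₁² = S₂², then S₁ = S₂. -/

import Mathlib

open Matrix

/-- A complex square matrix is semisimple iff it is diagonalizable over `ℂ`. -/
def IsSemisimpleMatC {n : ℕ} (S : Matrix (Fin n) (Fin n) ℂ) : Prop :=
  ∃ P D : Matrix (Fin n) (Fin n) ℂ, IsUnit P ∧ D.IsDiag ∧ S = P * D * P⁻¹

/-- A real square matrix is semisimple iff it is diagonalizable over `ℂ`. -/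
def IsSemisimpleMatR {n : ℕ} (S : Matrix (Fin n) (Fin n) ℝ) : Prop :=
  IsSemisimpleMatC (S.map (algebraMap ℝ ℂ))

/-- `z` is a (complex) eigenvalue of the complex matrix `S`. -/
def eigC {n : ℕ} (S : Matrix (Fin n) (Fin n) ℂ) (z : ℂ) : Prop :=
  S.charpoly.IsRoot z

/-- `z` is a (complex) eigenvalue of the real matrix `S`. -/
def eigR {n : ℕ} (S : Matrix (Fin n) (Fin n) ℝ) (z : ℂ) : Prop :=
  (S.charpoly.map (algebraMap ℝ ℂ)).IsRoot z


section SqInjAuxSection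
open Polynomial
namespace SqInjAux

/-- half plane predicate -/
def HPc (z : ℂ) : Prop := -(Real.pi / 2) < z.arg ∧ z.arg ≤ Real.pi / 2

lemma hp_sq_inj {x y : ℂ} (hx : HPc x) (hy : HPc y) (h : x ^ 2 = y ^ 2) : x = y := by
  rcases (Commute.all x y).sq_eq_sq_iff_eq_or_eq_neg.mp h with h' | h'
  · exact h'
  · subst h'
    obtain ⟨hx1, hx2⟩ := hx
    obtain ⟨hy1, hy2⟩ := hy
    rw [Complex.neg_pi_div_two_lt_arg_iff] at hx1 hy1
    rw [Complex.arg_le_pi_div_two_iff] at hx2 hy2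
    simp only [Complex.neg_re, Complex.neg_im] at hx1 hx2
    have h0 : y = 0 := by
      apply Complex.ext <;> simp only [Complex.zero_re, Complex.zero_im] <;>
        rcases hx1 with h1 | h1 <;> rcases hx2 with h2 | h2 <;>
        rcases hy1 with h3 | h3 <;> rcases hy2 with h4 | h4 <;> linarith
    rw [h0, neg_zero]

noncomputable def csqrtH (z : ℂ) : ℂ :=
  (Real.sqrt ‖z‖ : ℂ) * Complex.exp ((z.arg / 2 : ℝ) * Complex.I)

lemma csqrtH_sq (z : ℂ) : csqrtH z ^ 2 = z := by
  have h1 : ((Real.sqrt ‖z‖ : ℂ)) ^ 2 = (‖z‖ : ℂ) := by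
    rw [← Complex.ofReal_pow, Real.sq_sqrt (norm_nonneg z)]
  have h2 : Complex.exp (((z.arg / 2 : ℝ) : ℂ) * Complex.I) ^ 2
      = Complex.exp ((z.arg : ℂ) * Complex.I) := by
    rw [← Complex.exp_nat_mul]
    congr 1
    push_cast
    ring
  rw [csqrtH, mul_pow, h1, h2, Complex.norm_mul_exp_arg_mul_I]

lemma csqrtH_mem (z : ℂ) : HPc (csqrtH z) := by
  by_cases hz : z = 0
  · subst hz
    have : csqrtH 0 = 0 := by simp [csqrtH]
    rw [this]
    constructor <;> simp [Complex.arg_zero] <;> linarith [Real.pi_div_two_pos]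
  · have habs : 0 < ‖z‖ := norm_pos_iff.mpr hz
    have harg : Complex.arg (csqrtH z) = z.arg / 2 := by
      rw [csqrtH, Complex.exp_mul_I, Complex.arg_real_mul _ (Real.sqrt_pos.mpr habs)]
      exact Complex.arg_cos_add_sin_mul_I
        ⟨by linarith [Complex.neg_pi_lt_arg z, Real.pi_pos],
         by linarith [Complex.arg_le_pi z, Real.pi_pos]⟩
    constructor <;> rw [harg]
    · linarith [Complex.neg_pi_lt_arg z]
    · linarith [Complex.arg_le_pi z]

lemma csqrtH_sq_eq {x : ℂ} (hx : HPc x) : csqrtH (x ^ 2) = x :=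
  hp_sq_inj (csqrtH_mem _) hx (csqrtH_sq _)

lemma aeval_diagonal {n : ℕ} (p : ℂ[X]) (d : Fin n → ℂ) :
    aeval (Matrix.diagonal d) p = Matrix.diagonal fun i => p.eval (d i) := by
  have h : Matrix.diagonal d = Matrix.diagonalAlgHom (n := Fin n) (α := ℂ) ℂ d := rfl
  rw [h, aeval_algHom_apply]
  show Matrix.diagonal (aeval d p) = _
  have hfun : (aeval d) p = fun i => p.eval (d i) := by
    funext i
    simp [Polynomial.aeval_fn_apply, Polynomial.coe_aeval_eq_eval]
  rw [hfun]

def unitConjAlgHom {A : Type*} [Ring A] [Algebra ℂ A] (u : Aˣ) : A →ₐ[ℂ] A where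
  toFun x := ↑u * x * ↑u⁻¹
  map_one' := by simp
  map_mul' x y := by simp [mul_assoc]
  map_zero' := by simp
  map_add' x y := by simp [mul_add, add_mul]
  commutes' r := by
    simp [Algebra.algebraMap_eq_smul_one, mul_smul_comm, smul_mul_assoc]

lemma aeval_unit_conj {n : ℕ} (u : (Matrix (Fin n) (Fin n) ℂ)ˣ)
    (A : Matrix (Fin n) (Fin n) ℂ) (p : ℂ[X]) :
    aeval ((↑u : Matrix (Fin n) (Fin n) ℂ) * A * (↑u⁻¹ : Matrix (Fin n) (Fin n) ℂ)) p
      = (↑u : Matrix (Fin n) (Fin n) ℂ) * aeval A p * (↑u⁻¹ : Matrix (Fin n) (Fin n) ℂ) :=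
  aeval_algHom_apply (unitConjAlgHom u) A p

lemma charpoly_unit_conj {n : ℕ} (u : (Matrix (Fin n) (Fin n) ℂ)ˣ)
    (A : Matrix (Fin n) (Fin n) ℂ) :
    ((↑u : Matrix (Fin n) (Fin n) ℂ) * A * (↑u⁻¹ : Matrix (Fin n) (Fin n) ℂ)).charpoly
      = A.charpoly := by
  let f := (C : ℂ →+* ℂ[X]).mapMatrix (m := Fin n)
  let v : (Matrix (Fin n) (Fin n) ℂ[X])ˣ := Units.map f.toMonoidHom u
  have hvinv : ((↑u⁻¹ : Matrix (Fin n) (Fin n) ℂ)).map C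
      = (↑v⁻¹ : Matrix (Fin n) (Fin n) ℂ[X]) := by
    rfl
  have hcm : charmatrix ((↑u : Matrix (Fin n) (Fin n) ℂ) * A * (↑u⁻¹ : Matrix (Fin n) (Fin n) ℂ))
      = (↑v : Matrix (Fin n) (Fin n) ℂ[X]) * charmatrix A * (↑v⁻¹ : Matrix (Fin n) (Fin n) ℂ[X]) := by
    rw [charmatrix, charmatrix, mul_sub, sub_mul]
    congr 1
    · have hc : Commute (Matrix.scalar (Fin n) (X : ℂ[X])) ↑v :=
        Matrix.scalar_commute _ (fun r' => Commute.all _ _) _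
      rw [← hc.eq, mul_assoc, Units.mul_inv, mul_one]
    · show f ((↑u : Matrix (Fin n) (Fin n) ℂ) * A * (↑u⁻¹ : Matrix (Fin n) (Fin n) ℂ))
        = (↑v : Matrix (Fin n) (Fin n) ℂ[X]) * f A * (↑v⁻¹ : Matrix (Fin n) (Fin n) ℂ[X])
      rw [_root_.map_mul, _root_.map_mul]
      rfl
  rw [Matrix.charpoly, Matrix.charpoly, hcm, Matrix.det_units_conj]

lemma root_charpoly_diagonal {n : ℕ} (d : Fin n → ℂ) (i : Fin n) :
    (Matrix.diagonal d).charpoly.IsRoot (d i) := by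
  rw [Matrix.charpoly_of_upperTriangular _ (Matrix.blockTriangular_diagonal d)]
  simp only [Polynomial.IsRoot, eval_prod, Matrix.diagonal_apply_eq]
  exact Finset.prod_eq_zero (Finset.mem_univ i) (by simp)

end SqInjAux
end SqInjAuxSection

/-- **Injectivity of squaring on semisimple invertible matrices with spectrum in the
half plane `−π/2 < arg ≤ π/2`.** If `S₁, S₂` (real or complex `n × n`) are invertible
and semisimple, every eigenvalue `ρ e^{iθ}` (`ρ > 0`) of each satisfies
`−π/2 < θ ≤ π/2`, and `S₁² = S₂²`, then `S₁ = S₂`. -/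
theorem sq_injective_on_semisimple_halfplane (n : ℕ) :
    (∀ S₁ S₂ : Matrix (Fin n) (Fin n) ℝ, IsUnit S₁ → IsUnit S₂ →
      IsSemisimpleMatR S₁ → IsSemisimpleMatR S₂ →
      (∀ z : ℂ, eigR S₁ z → -(Real.pi / 2) < z.arg ∧ z.arg ≤ Real.pi / 2) →
      (∀ z : ℂ, eigR S₂ z → -(Real.pi / 2) < z.arg ∧ z.arg ≤ Real.pi / 2) →
      S₁ ^ 2 = S₂ ^ 2 → S₁ = S₂) ∧
    (∀ S₁ S₂ : Matrix (Fin n) (Fin n) ℂ, IsUnit S₁ → IsUnit S₂ →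
      IsSemisimpleMatC S₁ → IsSemisimpleMatC S₂ →
      (∀ z : ℂ, eigC S₁ z → -(Real.pi / 2) < z.arg ∧ z.arg ≤ Real.pi / 2) →
      (∀ z : ℂ, eigC S₂ z → -(Real.pi / 2) < z.arg ∧ z.arg ≤ Real.pi / 2) →
      S₁ ^ 2 = S₂ ^ 2 → S₁ = S₂) := by
  classical
  have main : ∀ S₁ S₂ : Matrix (Fin n) (Fin n) ℂ, IsUnit S₁ → IsUnit S₂ →
      IsSemisimpleMatC S₁ → IsSemisimpleMatC S₂ →
      (∀ z : ℂ, eigC S₁ z → -(Real.pi / 2) < z.arg ∧ z.arg ≤ Real.pi / 2) →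
      (∀ z : ℂ, eigC S₂ z → -(Real.pi / 2) < z.arg ∧ z.arg ≤ Real.pi / 2) →
      S₁ ^ 2 = S₂ ^ 2 → S₁ = S₂ := by
    intro S₁ S₂ _ _ hss1 hss2 he1 he2 hsq
    obtain ⟨P, D, hP, hD, hS1⟩ := hss1
    obtain ⟨Q, E, hQ, hE, hS2⟩ := hss2
    obtain ⟨u, hu⟩ := hP
    obtain ⟨w, hw⟩ := hQ
    have hS1u : S₁ = SqInjAux.unitConjAlgHom u D := by
      show S₁ = (↑u : Matrix (Fin n) (Fin n) ℂ) * D * (↑u⁻¹ : Matrix (Fin n) (Fin n) ℂ)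
      rw [hS1, ← hu, Matrix.coe_units_inv]
    have hS2w : S₂ = SqInjAux.unitConjAlgHom w E := by
      show S₂ = (↑w : Matrix (Fin n) (Fin n) ℂ) * E * (↑w⁻¹ : Matrix (Fin n) (Fin n) ℂ)
      rw [hS2, ← hw, Matrix.coe_units_inv]
    have hDd := hD.diagonal_diag
    have hEd := hE.diagonal_diag
    have hchar1 : S₁.charpoly = (Matrix.diagonal D.diag).charpoly := by
      calc S₁.charpoly = (SqInjAux.unitConjAlgHom u D).charpoly := by rw [hS1u]
        _ = D.charpoly := SqInjAux.charpoly_unit_conj u D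
        _ = (Matrix.diagonal D.diag).charpoly := by rw [hDd]
    have hchar2 : S₂.charpoly = (Matrix.diagonal E.diag).charpoly := by
      calc S₂.charpoly = (SqInjAux.unitConjAlgHom w E).charpoly := by rw [hS2w]
        _ = E.charpoly := SqInjAux.charpoly_unit_conj w E
        _ = (Matrix.diagonal E.diag).charpoly := by rw [hEd]
    have hdHP : ∀ i, SqInjAux.HPc (D.diag i) := fun i =>
      he1 _ (show S₁.charpoly.IsRoot _ by
        rw [hchar1]; exact SqInjAux.root_charpoly_diagonal _ i)
    have heHP : ∀ i, SqInjAux.HPc (E.diag i) := fun i =>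
      he2 _ (show S₂.charpoly.IsRoot _ by
        rw [hchar2]; exact SqInjAux.root_charpoly_diagonal _ i)
    set s : Finset ℂ := (Finset.univ.image fun i => D.diag i ^ 2) ∪
      (Finset.univ.image fun i => E.diag i ^ 2) with hs
    set p : Polynomial ℂ := Lagrange.interpolate s id SqInjAux.csqrtH with hp
    have hnode : ∀ x : ℂ, x ∈ s → p.eval x = SqInjAux.csqrtH x := fun x hx => by
      simpa [hp] using Lagrange.eval_interpolate_at_node (r := SqInjAux.csqrtH)
        (Set.injOn_id _) hx
    have hmem1 : ∀ i, D.diag i ^ 2 ∈ s := fun i =>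
      Finset.mem_union_left _ (Finset.mem_image_of_mem _ (Finset.mem_univ i))
    have hmem2 : ∀ i, E.diag i ^ 2 ∈ s := fun i =>
      Finset.mem_union_right _ (Finset.mem_image_of_mem _ (Finset.mem_univ i))
    have key : ∀ (v : (Matrix (Fin n) (Fin n) ℂ)ˣ) (F : Matrix (Fin n) (Fin n) ℂ),
        F.IsDiag → (∀ i, SqInjAux.HPc (F.diag i)) → (∀ i, F.diag i ^ 2 ∈ s) →
        Polynomial.aeval ((SqInjAux.unitConjAlgHom v F) ^ 2) p
          = SqInjAux.unitConjAlgHom v F := by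
      intro v F hF hHP hmemF
      have hF2 : F ^ 2 = Matrix.diagonal (fun i => F.diag i ^ 2) := by
        conv_lhs => rw [← hF.diagonal_diag]
        rw [Matrix.diagonal_pow]
        rfl
      have h1 : (SqInjAux.unitConjAlgHom v F) ^ 2
          = SqInjAux.unitConjAlgHom v (Matrix.diagonal (fun i => F.diag i ^ 2)) := by
        rw [← hF2, ← map_pow]
      rw [h1]
      rw [show SqInjAux.unitConjAlgHom v (Matrix.diagonal (fun i => F.diag i ^ 2))
          = (↑v : Matrix (Fin n) (Fin n) ℂ) * Matrix.diagonal (fun i => F.diag i ^ 2)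
            * (↑v⁻¹ : Matrix (Fin n) (Fin n) ℂ) from rfl]
      rw [SqInjAux.aeval_unit_conj, SqInjAux.aeval_diagonal]
      rw [show (fun i => p.eval (F.diag i ^ 2)) = F.diag from
        funext fun i => by rw [hnode _ (hmemF i), SqInjAux.csqrtH_sq_eq (hHP i)]]
      rw [hF.diagonal_diag]
      rfl
    calc S₁ = Polynomial.aeval (S₁ ^ 2) p := by
          rw [hS1u]; exact (key u D hD hdHP hmem1).symm
      _ = Polynomial.aeval (S₂ ^ 2) p := by rw [hsq]
      _ = S₂ := by rw [hS2w]; exact key w E hE heHP hmem2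
  refine ⟨?_, main⟩
  intro S₁ S₂ hU1 hU2 hs1 hs2 he1 he2 hsq
  have h := main (S₁.map (algebraMap ℝ ℂ)) (S₂.map (algebraMap ℝ ℂ))
    (hU1.map (RingHom.mapMatrix (algebraMap ℝ ℂ)))
    (hU2.map (RingHom.mapMatrix (algebraMap ℝ ℂ)))
    hs1 hs2
    (fun z hz => he1 z (show eigR S₁ z by
      rw [eigR, ← Matrix.charpoly_map]; exact hz))
    (fun z hz => he2 z (show eigR S₂ z by
      rw [eigR, ← Matrix.charpoly_map]; exact hz))
    (by
      show (RingHom.mapMatrix (algebraMap ℝ ℂ)) S₁ ^ 2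
        = (RingHom.mapMatrix (algebraMap ℝ ℂ)) S₂ ^ 2
      rw [← map_pow, ← map_pow, hsq])
  ext i j
  have h2 := congrFun (congrFun h i) j
  simp only [Matrix.map_apply] at h2
  exact_mod_cast h2
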